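/- Fix α > 0 and constants L_A + σ_A² > 0, L_B + σ_B² > 0, and set c = ((L_A+σ_A²)/(L_B+σ_B²))^{1/α}. For E(n_A,n_B) = [n_B^{2α}(L_B+σ_B²) + n_A^{2α}(L_A+σ_A²)]/(n_A^α+n_B^α)², the partial derivative ∂E/∂n_B(n_A, n_B) equals (2α n_B^{α-1} n_A^α)/(n_A^α+n_B^α)³ · (n_B^α(L_B+σ_B²) − n_A^α(L_A+σ_A²)); hence ∂E/∂n_B < 0 if n_B < c·n_A and ∂E/∂n_B > 0 if n_B > c·n_A. -/

import Mathlib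

open Real

/-- explicit formula for `∂E/∂n_B` and the resulting sign pattern around
`n_B = c · n_A` with `c = ((L_A+σ_A²)/(L_B+σ_B²))^(1/α)`. -/
theorem stmt_2 (α LA LB sA2 sB2 : ℝ)
    (hα : 0 < α)
    (hLA : 0 ≤ LA) (hLB : 0 ≤ LB) (hsA : 0 ≤ sA2) (hsB : 0 ≤ sB2)
    (hA : 0 < LA + sA2) (hB : 0 < LB + sB2)
    (c : ℝ) (hc : c = ((LA + sA2) / (LB + sB2)) ^ (α⁻¹))
    (E : ℝ → ℝ → ℝ)
    (hE : ∀ x y : ℝ, E x y =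
      (y ^ (2 * α) * (LB + sB2) + x ^ (2 * α) * (LA + sA2)) / (x ^ α + y ^ α) ^ 2) :
    ∀ nA nB : ℝ, 0 < nA → 0 < nB →
      deriv (fun y => E nA y) nB =
        (2 * α * nB ^ (α - 1) * nA ^ α) / (nA ^ α + nB ^ α) ^ 3 *
          (nB ^ α * (LB + sB2) - nA ^ α * (LA + sA2)) ∧
      (nB < c * nA → deriv (fun y => E nA y) nB < 0) ∧
      (c * nA < nB → 0 < deriv (fun y => E nA y) nB) := by
  intro nA nB hnA hnB
  set A := LA + sA2 with hAdef
  set B := LB + sB2 with hBdef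
  have hvA : (0:ℝ) < nA ^ α := Real.rpow_pos_of_pos hnA α
  have hvB : (0:ℝ) < nB ^ α := Real.rpow_pos_of_pos hnB α
  have hu : (0:ℝ) < nB ^ (α - 1) := Real.rpow_pos_of_pos hnB _
  have hden : (0:ℝ) < nA ^ α + nB ^ α := by linarith
  have hfun : (fun y => E nA y) =
      (fun y : ℝ => (y ^ (2 * α) * B + nA ^ (2 * α) * A) / (nA ^ α + y ^ α) ^ 2) :=
    funext fun y => hE nA y
  have h1 : HasDerivAt (fun y : ℝ => y ^ (2 * α) * B + nA ^ (2 * α) * A)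
      (2 * α * nB ^ (2 * α - 1) * B) nB := by
    have := Real.hasDerivAt_rpow_const (x := nB) (p := 2 * α) (Or.inl hnB.ne')
    exact (this.mul_const B).add_const _
  have h2 : HasDerivAt (fun y : ℝ => (nA ^ α + y ^ α) ^ 2)
      (2 * (nA ^ α + nB ^ α) ^ 1 * (α * nB ^ (α - 1))) nB := by
    have h := (Real.hasDerivAt_rpow_const (x := nB) (p := α) (Or.inl hnB.ne')).const_add
      (nA ^ α)
    have h' : HasDerivAt (fun y : ℝ => (nA ^ α + y ^ α) ^ 2) _ nB := h.pow 2
    simpa using h'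
  have h3 := h1.div h2 (by positivity)
  -- rpow addition facts
  have e1 : nB ^ (2 * α) = nB ^ α * nB ^ α := by
    rw [← Real.rpow_add hnB]; ring_nf
  have e2 : nA ^ (2 * α) = nA ^ α * nA ^ α := by
    rw [← Real.rpow_add hnA]; ring_nf
  have e3 : nB ^ (2 * α - 1) = nB ^ α * nB ^ (α - 1) := by
    rw [← Real.rpow_add hnB]; ring_nf
  have hderiv : deriv (fun y => E nA y) nB =
      (2 * α * nB ^ (α - 1) * nA ^ α) / (nA ^ α + nB ^ α) ^ 3 *
        (nB ^ α * B - nA ^ α * A) := by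
    rw [hfun, (show HasDerivAt (fun y : ℝ => (y ^ (2 * α) * B + nA ^ (2 * α) * A) / (nA ^ α + y ^ α) ^ 2) _ nB from h3).deriv]
    rw [e1, e2, e3]
    field_simp
    ring
  refine ⟨hderiv, ?_, ?_⟩
  · intro hlt
    rw [hderiv]
    have hpre : 0 < (2 * α * nB ^ (α - 1) * nA ^ α) / (nA ^ α + nB ^ α) ^ 3 := by
      positivity
    have hcα : c ^ α = A / B := by
      rw [hc, ← Real.rpow_mul (le_of_lt (div_pos hA hB)), inv_mul_cancel₀ hα.ne',
        Real.rpow_one]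
    have hkey : nB ^ α * B < nA ^ α * A := by
      have hcn : (0:ℝ) ≤ nB := hnB.le
      have h := Real.rpow_lt_rpow hcn hlt hα
      rw [Real.mul_rpow (by rw [hc]; positivity) hnA.le, hcα] at h
      have h' := mul_lt_mul_of_pos_right h hB
      have heq : A / B * nA ^ α * B = nA ^ α * A := by field_simp
      rw [heq] at h'
      linarith
    exact mul_neg_of_pos_of_neg hpre (by linarith)
  · intro hlt
    rw [hderiv]
    have hpre : 0 < (2 * α * nB ^ (α - 1) * nA ^ α) / (nA ^ α + nB ^ α) ^ 3 := by
      positivity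
    have hcα : c ^ α = A / B := by
      rw [hc, ← Real.rpow_mul (le_of_lt (div_pos hA hB)), inv_mul_cancel₀ hα.ne',
        Real.rpow_one]
    have hkey : nA ^ α * A < nB ^ α * B := by
      have hcn : (0:ℝ) ≤ c * nA := by rw [hc]; positivity
      have h := Real.rpow_lt_rpow hcn hlt hα
      rw [Real.mul_rpow (by rw [hc]; positivity) hnA.le, hcα] at h
      have h' := mul_lt_mul_of_pos_right h hB
      have heq : A / B * nA ^ α * B = nA ^ α * A := by field_simp
      rw [heq] at h'
      linarith
    exact mul_pos hpre (by linarith)
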